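/- Let S be a topological semigroup with open shifts. Then the semiregularization S_sr (S with the topology generated by the regular open sets of S) is a topological semigroup under the same multiplication. -/

import Mathlib

open Topology

/-- The semiregularization topology: the topology generated by the regular open
sets (sets U with Int(Cl(U)) = U) of the original topology. -/
def srTop (X : Type*) [TopologicalSpace X] : TopologicalSpace X :=
  TopologicalSpace.generateFrom {U : Set X | interior (closure U) = U}

/-- Let S be a topological semigroup with open shifts. Then the semiregularization
S_sr is a topological semigroup under the same multiplication. -/
theorem stmt_6 {S : Type*} [Semigroup S] [TopologicalSpace S]
    (hmul : Continuous fun p : S × S => p.1 * p.2)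
    (hshift : ∀ a : S, IsOpenMap (fun x => a * x) ∧ IsOpenMap (fun x => x * a)) :
    Continuous[@instTopologicalSpaceProd S S (srTop S) (srTop S), srTop S]
      (fun p : S × S => p.1 * p.2) := by
  refine continuous_generateFrom_iff.mpr ?_
  intro U hU
  simp only [Set.mem_setOf_eq] at hU
  rw [@isOpen_iff_forall_mem_open (S × S) (@instTopologicalSpaceProd S S (srTop S) (srTop S)) _]
  rintro ⟨a, b⟩ hab
  -- U is open in the original topology
  have hUopen : IsOpen U := hU ▸ isOpen_interior
  -- continuity of mul in original topology gives open boxes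
  have hpre : IsOpen ((fun p : S × S => p.1 * p.2) ⁻¹' U) := hUopen.preimage hmul
  obtain ⟨V, W, hV, hW, haV, hbW, hVW⟩ := isOpen_prod_iff.mp hpre a b hab
  set V' := interior (closure V) with hV'def
  set W' := interior (closure W) with hW'def
  have hVsub : V ⊆ V' := interior_maximal subset_closure hV
  have hWsub : W ⊆ W' := interior_maximal subset_closure hW
  have hmulVW : ∀ x ∈ V, ∀ y ∈ W, x * y ∈ U := fun x hx y hy => hVW (Set.mk_mem_prod hx hy)
  -- Step A: V' * W ⊆ U
  have hA : ∀ x ∈ V', ∀ w ∈ W, x * w ∈ U := by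
    intro x hx w hw
    have hcont : Continuous fun z : S => z * w :=
      hmul.comp (continuous_id.prodMk continuous_const)
    have h1 : (fun z : S => z * w) '' V' ⊆ closure U := by
      calc (fun z : S => z * w) '' V'
          ⊆ (fun z : S => z * w) '' closure V := Set.image_mono interior_subset
        _ ⊆ closure ((fun z : S => z * w) '' V) := image_closure_subset_closure_image hcont
        _ ⊆ closure U := closure_mono (by rintro _ ⟨v, hv, rfl⟩; exact hmulVW v hv w hw)
    have h2 : IsOpen ((fun z : S => z * w) '' V') := (hshift w).2 _ isOpen_interior
    have h3 : (fun z : S => z * w) '' V' ⊆ U := hU ▸ interior_maximal h1 h2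
    exact h3 ⟨x, hx, rfl⟩
  -- Step B: for x ∈ V', x * W' ⊆ U
  have hB : ∀ x ∈ V', ∀ y ∈ W', x * y ∈ U := by
    intro x hx y hy
    have hcont : Continuous fun z : S => x * z :=
      hmul.comp (continuous_const.prodMk continuous_id)
    have h1 : (fun z : S => x * z) '' W' ⊆ closure U := by
      calc (fun z : S => x * z) '' W'
          ⊆ (fun z : S => x * z) '' closure W := Set.image_mono interior_subset
        _ ⊆ closure ((fun z : S => x * z) '' W) := image_closure_subset_closure_image hcont
        _ ⊆ closure U := closure_mono (by rintro _ ⟨w, hw, rfl⟩; exact hA x hx w hw)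
    have h2 : IsOpen ((fun z : S => x * z) '' W') := (hshift x).1 _ isOpen_interior
    have h3 : (fun z : S => x * z) '' W' ⊆ U := hU ▸ interior_maximal h1 h2
    exact h3 ⟨y, hy, rfl⟩
  -- V' and W' are regular open, hence open in srTop
  have hregV : interior (closure V') = V' := by
    have : closure V' = closure V := Set.Subset.antisymm
      (by simpa using closure_mono (interior_subset : V' ⊆ closure V))
      (closure_mono hVsub)
    rw [hV'def, this]
  have hregW : interior (closure W') = W' := by
    have : closure W' = closure W := Set.Subset.antisymm
      (by simpa using closure_mono (interior_subset : W' ⊆ closure W))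
      (closure_mono hWsub)
    rw [hW'def, this]
  have hV'sr : IsOpen[srTop S] V' := TopologicalSpace.GenerateOpen.basic _ hregV
  have hW'sr : IsOpen[srTop S] W' := TopologicalSpace.GenerateOpen.basic _ hregW
  refine ⟨V' ×ˢ W', ?_, ?_, ⟨hVsub haV, hWsub hbW⟩⟩
  · rintro ⟨x, y⟩ ⟨hx, hy⟩; exact hB x hx y hy
  · exact @IsOpen.prod S S (srTop S) (srTop S) _ _ hV'sr hW'sr
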